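/- Soundness of successful TSLD-derivations: if there is a successful TSLD-derivation of query Q from program P with computed answer substitution θ, then θ(Q) is a logical consequence of P, i.e., every model of P (in the typed three-valued semantics) is a model of θ(Q). -/

import Mathlib

/-- Base types for constants. -/
inductive Ty : Type
  | int | float | atom | str
  deriving DecidableEq

/-- First-order terms: variables, typed constants, and compound terms. -/
inductive Term : Type
  | var : ℕ → Term
  | const : ℕ → Ty → Term
  | app : ℕ → List Term → Term

mutual
  /-- Application of a substitution to a term. -/
  def subst (θ : ℕ → Term) : Term → Term
    | .var x => θ x
    | .const c τ => .const c τ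
    | .app f ts => .app f (substList θ ts)
  /-- Application of a substitution to a list of terms. -/
  def substList (θ : ℕ → Term) : List Term → List Term
    | [] => []
    | t :: ts => subst θ t :: substList θ ts
end

mutual
  /-- Occurrence of a variable in a term. -/
  def occurs (x : ℕ) : Term → Bool
    | .var y => x == y
    | .const _ _ => false
    | .app _ ts => occursList x ts
  /-- Occurrence of a variable in a list of terms. -/
  def occursList (x : ℕ) : List Term → Bool
    | [] => false
    | t :: ts => occurs x t || occursList x ts
end

/-- Composition of substitutions: (θ ∘ η)(X) = θ(η(X)). -/
def comp (θ η : ℕ → Term) : ℕ → Term := fun x => subst θ (η x)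

/-- The substitution binding the single variable x to t. -/
def single (x : ℕ) (t : Term) : ℕ → Term := fun y => if y = x then t else .var y

/-- θ is a unifier of t₁ and t₂. -/
def IsUnifier (θ : ℕ → Term) (t₁ t₂ : Term) : Prop := subst θ t₁ = subst θ t₂

/-- θ is a most general unifier of t₁ and t₂. -/
def IsMGU (θ : ℕ → Term) (t₁ t₂ : Term) : Prop :=
  IsUnifier θ t₁ t₂ ∧ ∀ η, IsUnifier η t₁ t₂ → ∃ δ, ∀ x, η x = subst δ (θ x)

/-- θ is idempotent. -/
def Idempotent (θ : ℕ → Term) : Prop := ∀ t, subst θ (subst θ t) = subst θ t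

/-- Configurations of the typed unification algorithm: a multiset of equations
together with the Boolean flag, or the halting value wrong. -/
inductive Config : Type
  | state : Multiset (Term × Term) → Bool → Config
  | wrong : Config

/-- Application of a single binding to an equation. -/
def substEq (x : ℕ) (t : Term) (e : Term × Term) : Term × Term :=
  (subst (single x t) e.1, subst (single x t) e.2)

/-- The rewrite rules of the typed unification algorithm. -/
inductive Step : Config → Config → Prop
  | decompose (f : ℕ) (ts ss : List Term) (R : Multiset (Term × Term)) (F : Bool)
      (h : ts.length = ss.length) :
      Step (.state ((Term.app f ts, Term.app f ss) ::ₘ R) F)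
           (.state (↑(ts.zip ss) + R) F)
  | clash (f g : ℕ) (ts ss : List Term) (R : Multiset (Term × Term)) (F : Bool)
      (h : f ≠ g ∨ ts.length ≠ ss.length) :
      Step (.state ((Term.app f ts, Term.app g ss) ::ₘ R) F) .wrong
  | constDel (c : ℕ) (τ : Ty) (R : Multiset (Term × Term)) (F : Bool) :
      Step (.state ((Term.const c τ, Term.const c τ) ::ₘ R) F) (.state R F)
  | constFalse (c d : ℕ) (τ : Ty) (R : Multiset (Term × Term)) (F : Bool) (h : c ≠ d) :
      Step (.state ((Term.const c τ, Term.const d τ) ::ₘ R) F) (.state R false)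
  | constWrong (c d : ℕ) (τ σ : Ty) (R : Multiset (Term × Term)) (F : Bool) (h : τ ≠ σ) :
      Step (.state ((Term.const c τ, Term.const d σ) ::ₘ R) F) .wrong
  | constApp (c : ℕ) (τ : Ty) (f : ℕ) (ts : List Term) (R : Multiset (Term × Term)) (F : Bool) :
      Step (.state ((Term.const c τ, Term.app f ts) ::ₘ R) F) .wrong
  | appConst (c : ℕ) (τ : Ty) (f : ℕ) (ts : List Term) (R : Multiset (Term × Term)) (F : Bool) :
      Step (.state ((Term.app f ts, Term.const c τ) ::ₘ R) F) .wrong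
  | varDel (x : ℕ) (R : Multiset (Term × Term)) (F : Bool) :
      Step (.state ((Term.var x, Term.var x) ::ₘ R) F) (.state R F)
  | orient (x : ℕ) (t : Term) (R : Multiset (Term × Term)) (F : Bool)
      (h : ∀ y, t ≠ Term.var y) :
      Step (.state ((t, Term.var x) ::ₘ R) F) (.state ((Term.var x, t) ::ₘ R) F)
  | eliminate (x : ℕ) (t : Term) (R : Multiset (Term × Term)) (F : Bool)
      (h₁ : occurs x t = false)
      (h₂ : ∃ e ∈ R, occurs x e.1 = true ∨ occurs x e.2 = true) :
      Step (.state ((Term.var x, t) ::ₘ R) F)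
           (.state ((Term.var x, t) ::ₘ R.map (substEq x t)) F)
  | occursFail (x : ℕ) (t : Term) (R : Multiset (Term × Term)) (F : Bool)
      (h₁ : occurs x t = true) (h₂ : t ≠ Term.var x) :
      Step (.state ((Term.var x, t) ::ₘ R) F) (.state R false)

/-- Reachability by rewrite steps. -/
def Reaches : Config → Config → Prop := Relation.ReflTransGen Step

/-- A configuration to which no rule applies. -/
def NormalCfg (c : Config) : Prop := ∀ c', ¬ Step c c'

/-- The typed unification algorithm on input S outputs wrong. -/
def OutputsWrong (S : Multiset (Term × Term)) : Prop :=
  Reaches (Config.state S true) Config.wrong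

/-- The typed unification algorithm on input S outputs false. -/
def OutputsFalse (S : Multiset (Term × Term)) : Prop :=
  ∃ S', Reaches (Config.state S true) (Config.state S' false) ∧ NormalCfg (Config.state S' false)

/-- The typed unification algorithm on input S₀ succeeds with solved set S. -/
def OutputsSet (S₀ S : Multiset (Term × Term)) : Prop :=
  Reaches (Config.state S₀ true) (Config.state S true) ∧ NormalCfg (Config.state S true)

/-- Weak Kleene three-valued logic values. -/
inductive V3 : Type
  | tt | ff | wrong
  deriving DecidableEq

namespace V3

/-- Weak Kleene conjunction. -/
def and : V3 → V3 → V3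
  | tt, tt => tt
  | tt, ff => ff
  | ff, tt => ff
  | ff, ff => ff
  | _, _ => wrong

/-- Weak Kleene disjunction. -/
def or : V3 → V3 → V3
  | tt, tt => tt
  | tt, ff => tt
  | ff, tt => tt
  | ff, ff => ff
  | _, _ => wrong

/-- Weak Kleene negation. -/
def neg : V3 → V3
  | tt => ff
  | ff => tt
  | wrong => wrong

/-- Weak Kleene implication p → q := (¬p) ∨ q. -/
def imp (p q : V3) : V3 := or (neg p) q

end V3

/-- Atoms: a predicate symbol applied to a list of terms. -/
structure Atom : Type where
  pred : ℕ
  args : List Term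

/-- A clause H ← B̄. -/
structure Clause : Type where
  head : Atom
  body : List Atom

/-- Apply a substitution to an atom. -/
def substAtom (θ : ℕ → Term) (A : Atom) : Atom := ⟨A.pred, substList θ A.args⟩

/-- Encode an atom as a term; unification of atoms is unification of the
encoding terms. -/
def atomT (A : Atom) : Term := Term.app A.pred A.args

/-- Three-valued interpretations: a predicate symbol applied to (instantiated)
argument terms receives a truth value in V3 (wrong representing a type error,
i.e. arguments outside the typed domain of the predicate). -/
def Interp : Type := ℕ → List Term → V3

/-- Value of an atom under an interpretation and a state σ. -/
def atomVal (I : Interp) (σ : ℕ → Term) (A : Atom) : V3 :=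
  I A.pred (substList σ A.args)

/-- Value of a query: weak Kleene conjunction of the values of its atoms. -/
def queryVal (I : Interp) (σ : ℕ → Term) (Q : List Atom) : V3 :=
  (Q.map (atomVal I σ)).foldr V3.and V3.tt

/-- I is a model of the clause c: under every state the clause is true. -/
def ModelsClause (I : Interp) (c : Clause) : Prop :=
  ∀ σ, V3.imp (queryVal I σ c.body) (atomVal I σ c.head) = V3.tt

/-- I is a model of the program P. -/
def ModelsProgram (I : Interp) (P : List Clause) : Prop :=
  ∀ c ∈ P, ModelsClause I c

/-- I is a model of the query Q. -/
def ModelsQuery (I : Interp) (Q : List Atom) : Prop :=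
  ∀ σ, queryVal I σ Q = V3.tt

/-- A substitution which merely renames variables (injectively). -/
def IsRenaming (ρ : ℕ → Term) : Prop :=
  ∃ f : ℕ → ℕ, Function.Injective f ∧ ∀ x, ρ x = Term.var (f x)

/-- Successful TSLD-derivations of a query in P, together with the computed
answer substitution (composition of the mgus used): a step selects an atom A,
unifies it with the renamed head of an input clause via an mgu θ (typed
unification agrees with standard unification on successes), and replaces A by
the instantiated clause body. -/
inductive Deriv (P : List Clause) : List Atom → (ℕ → Term) → Prop
  | done : Deriv P [] Term.var
  | step (Q₁ Q₂ : List Atom) (A : Atom) (c : Clause) (ρ θ η : ℕ → Term)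
      (hc : c ∈ P) (hρ : IsRenaming ρ)
      (hmgu : IsMGU θ (atomT A) (atomT (substAtom ρ c.head)))
      (hrest : Deriv P ((Q₁ ++ (c.body.map (substAtom ρ)) ++ Q₂).map (substAtom θ)) η) :
      Deriv P (Q₁ ++ A :: Q₂) (comp η θ)

mutual
  theorem subst_comp (θ η : ℕ → Term) : (t : Term) →
      subst (comp θ η) t = subst θ (subst η t)
    | .var x => rfl
    | .const c τ => rfl
    | .app f ts => by simp [subst, substList_comp θ η ts]
  theorem substList_comp (θ η : ℕ → Term) : (ts : List Term) →
      substList (comp θ η) ts = substList θ (substList η ts)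
    | [] => rfl
    | t :: ts => by
        simp [substList, subst_comp θ η t, substList_comp θ η ts]
end

theorem and_eq_tt {a b : V3} : V3.and a b = V3.tt ↔ a = V3.tt ∧ b = V3.tt := by
  cases a <;> cases b <;> simp [V3.and]

theorem queryVal_eq_tt (I : Interp) (σ : ℕ → Term) (Q : List Atom) :
    queryVal I σ Q = V3.tt ↔ ∀ A ∈ Q, atomVal I σ A = V3.tt := by
  induction Q with
  | nil => simp [queryVal]
  | cons A Q ih =>
      simp only [queryVal, List.map_cons, List.foldr_cons, and_eq_tt]
      constructor
      · rintro ⟨hA, hQ⟩ B hB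
        rcases List.mem_cons.mp hB with rfl | hB
        · exact hA
        · exact (ih.mp hQ) B hB
      · intro h
        exact ⟨h A (List.mem_cons_self), ih.mpr fun B hB => h B (List.mem_cons_of_mem _ hB)⟩

theorem atomVal_subst (I : Interp) (σ θ : ℕ → Term) (A : Atom) :
    atomVal I σ (substAtom θ A) = atomVal I (comp σ θ) A := by
  simp [atomVal, substAtom, substList_comp]

/-- soundness of successful TSLD-derivations: if there is a
successful TSLD-derivation of Q from P with computed answer substitution θ,
then every model of P is a model of θ(Q). -/
theorem tsld_soundness (P : List Clause) (Q : List Atom) (θ : ℕ → Term)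
    (h : Deriv P Q θ) :
    ∀ I : Interp, ModelsProgram I P → ModelsQuery I (Q.map (substAtom θ)) := by
  induction h with
  | done =>
      intro I _ σ
      simp [queryVal]
  | step Q₁ Q₂ A c ρ θ' η hc hρ hmgu hrest ih =>
      intro I hP σ
      set τ : ℕ → Term := comp (comp σ η) θ' with hτ
      -- from IH: all atoms of Q₁, ρ(body), Q₂ are true under τ
      have hih := ih I hP σ
      rw [queryVal_eq_tt] at hih
      have hall : ∀ B ∈ Q₁ ++ c.body.map (substAtom ρ) ++ Q₂,
          atomVal I τ B = V3.tt := by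
        intro B hB
        have := hih (substAtom η (substAtom θ' B)) (by
          simp only [List.map_map]
          exact List.mem_map_of_mem hB)
        rwa [atomVal_subst, atomVal_subst] at this
      -- head atom
      have hbody : queryVal I (comp τ ρ) c.body = V3.tt := by
        rw [queryVal_eq_tt]
        intro B hB
        have := hall (substAtom ρ B) (by
          simp only [List.mem_append]
          exact Or.inl (Or.inr (List.mem_map_of_mem hB)))
        rwa [atomVal_subst] at this
      have hclause := hP c hc (comp τ ρ)
      rw [hbody] at hclause
      have hhead : atomVal I (comp τ ρ) c.head = V3.tt := by
        cases hval : atomVal I (comp τ ρ) c.head <;>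
          rw [hval] at hclause <;> simp_all [V3.imp, V3.neg, V3.or]
      -- unifier gives atomVal I τ A = head value
      have huni := hmgu.1
      unfold IsUnifier atomT at huni
      simp only [subst, substAtom] at huni
      have hpred : A.pred = c.head.pred := by injection huni
      have hargs : substList θ' A.args = substList θ' (substList ρ c.head.args) := by
        injection huni
      have hA : atomVal I τ A = V3.tt := by
        unfold atomVal
        rw [hpred, hτ, substList_comp, hargs, ← substList_comp, ← substList_comp]
        have : atomVal I (comp τ ρ) c.head
            = I c.head.pred (substList (comp (comp (comp σ η) θ') ρ) c.head.args) := rfl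
        rw [← this, hhead]
      -- assemble
      have hq : queryVal I τ (Q₁ ++ A :: Q₂) = V3.tt := by
        rw [queryVal_eq_tt]
        intro B hB
        rcases List.mem_append.mp hB with hB | hB
        · exact hall B (by simp [List.mem_append, hB])
        · rcases List.mem_cons.mp hB with rfl | hB
          · exact hA
          · exact hall B (by simp [List.mem_append, Or.inr hB])
      -- transfer to substituted query
      rw [queryVal_eq_tt]
      intro B hB
      rcases List.mem_map.mp hB with ⟨B', hB', rfl⟩
      rw [atomVal_subst]
      have : comp σ (comp η θ') = τ := by
        funext x
        simp [hτ, comp, subst_comp]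
      rw [this]
      exact (queryVal_eq_tt I τ _).mp hq B' hB'
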